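/- arXiv:2605.07576 — 2 statements merged into one kernel-verified Lean document; each statement's English description precedes it below -/
import Mathlib

section
/- Let d ≥ 1 and let P be an affine hyperplane in ℝ^d with unit normal vector n = (n₁,…,n_d). Let f⁺, f⁻ : ℝ^d → ℝ be differentiable at a point x₀ ∈ P, and assume f⁺(x) = f⁻(x) for all x ∈ P. Then for all coordinate indices j, k ∈ {1,…,d} the jump tensor is symmetric: (∂_j f⁺(x₀) − ∂_j f⁻(x₀)) · n_k = (∂_k f⁺(x₀) − ∂_k f⁻(x₀)) · n_j. -/
open scoped RealInnerProductSpace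

/-- If two functions differentiable at a point `x₀` of an affine
hyperplane `P` of `ℝ^d` with unit normal `n` coincide on `P`, then the gradient-jump
tensor `(∂_j f⁺ − ∂_j f⁻) n_k` at `x₀` is symmetric in the indices `j, k`. -/
theorem gradient_jump_tensor_symmetric
    (d : ℕ) (hd : 1 ≤ d)
    (P : AffineSubspace ℝ (EuclideanSpace ℝ (Fin d)))
    (hP : Module.finrank ℝ P.direction = d - 1)
    (n : EuclideanSpace ℝ (Fin d)) (hn : n ∈ P.directionᗮ) (hn1 : ‖n‖ = 1)
    (fplus fminus : EuclideanSpace ℝ (Fin d) → ℝ)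
    (x₀ : EuclideanSpace ℝ (Fin d)) (hx₀ : x₀ ∈ P)
    (hfp : DifferentiableAt ℝ fplus x₀) (hfm : DifferentiableAt ℝ fminus x₀)
    (heq : ∀ x ∈ P, fplus x = fminus x)
    (j k : Fin d) :
    (fderiv ℝ fplus x₀ (EuclideanSpace.single j 1)
        - fderiv ℝ fminus x₀ (EuclideanSpace.single j 1)) * n k =
      (fderiv ℝ fplus x₀ (EuclideanSpace.single k 1)
        - fderiv ℝ fminus x₀ (EuclideanSpace.single k 1)) * n j := by
  -- derivatives agree on tangent directions
  have hL : ∀ v ∈ P.direction, fderiv ℝ fplus x₀ v = fderiv ℝ fminus x₀ v := by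
    intro v hv
    have hcurve : ∀ t : ℝ, (x₀ + t • v) ∈ P := by
      intro t
      have : (t • v) +ᵥ x₀ ∈ P :=
        AffineSubspace.vadd_mem_of_mem_direction (P.direction.smul_mem t hv) hx₀
      simpa [add_comm] using this
    have hc : HasDerivAt (fun t : ℝ => x₀ + t • v) v (0 : ℝ) := by
      simpa using ((hasDerivAt_id (0 : ℝ)).smul_const v).const_add x₀
    have hder : ∀ (f : EuclideanSpace ℝ (Fin d) → ℝ), DifferentiableAt ℝ f x₀ →
        HasDerivAt (fun t : ℝ => f (x₀ + t • v)) (fderiv ℝ f x₀ v) 0 := by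
      intro f hf
      have hf' : HasFDerivAt f (fderiv ℝ f x₀) ((fun t : ℝ => x₀ + t • v) 0) := by
        simpa using hf.hasFDerivAt
      exact hf'.comp_hasDerivAt 0 hc
    have h1 := hder fplus hfp
    have h2 := hder fminus hfm
    have hfun : (fun t : ℝ => fplus (x₀ + t • v)) = fun t : ℝ => fminus (x₀ + t • v) := by
      funext t; exact heq _ (hcurve t)
    rw [hfun] at h1
    exact h1.unique h2
  -- the span of n is the orthogonal complement of the direction
  have hn0 : n ≠ 0 := by
    intro h; rw [h, norm_zero] at hn1; norm_num at hn1
  have hspan : (ℝ ∙ n) = P.directionᗮ := by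
    apply Submodule.eq_of_le_of_finrank_eq
    · exact (Submodule.span_singleton_le_iff_mem _ _).mpr hn
    · rw [finrank_span_singleton hn0]
      have h2 := Submodule.finrank_add_finrank_orthogonal (K := P.direction)
      have hdim : Module.finrank ℝ (EuclideanSpace ℝ (Fin d)) = d := by
        simp [finrank_euclideanSpace]
      omega
  have hdir : P.direction = (ℝ ∙ n)ᗮ := by
    rw [hspan, Submodule.orthogonal_orthogonal]
  -- decompose coordinate vectors
  have hmem : ∀ i : Fin d, (EuclideanSpace.single i (1:ℝ) - n i • n) ∈ P.direction := by
    intro i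
    rw [hdir, Submodule.mem_orthogonal_singleton_iff_inner_left]
    have h1 : ⟪EuclideanSpace.single i (1:ℝ), n⟫ = n i := by
      simp [EuclideanSpace.inner_single_left]
    have h2 : ⟪n, n⟫ = (1 : ℝ) := by
      rw [real_inner_self_eq_norm_sq, hn1]; norm_num
    rw [inner_sub_left, inner_smul_left, h1, h2]
    simp
  have key : ∀ i : Fin d,
      fderiv ℝ fplus x₀ (EuclideanSpace.single i 1)
        - fderiv ℝ fminus x₀ (EuclideanSpace.single i 1)
      = n i * (fderiv ℝ fplus x₀ n - fderiv ℝ fminus x₀ n) := by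
    intro i
    have := hL _ (hmem i)
    simp only [map_sub, map_smul, smul_eq_mul] at this
    linarith [this]
  rw [key j, key k]
  ring
end

section
/- Let P be an affine plane in ℝ³ with unit normal vector n. Let A⁺, A⁻ : ℝ³ → ℝ³ be vector fields differentiable at a point x₀ ∈ P, and assume A⁺(x) = A⁻(x) for all x ∈ P. Then the normal component of the jump of the curls vanishes: ⟪curl A⁺(x₀) − curl A⁻(x₀), n⟫ = 0. -/
open scoped RealInnerProductSpace

/-- The Levi-Civita symbol on three indices: the sign of the permutation `(i,j,k)`
of `(0,1,2)` when the indices are pairwise distinct, and zero otherwise. -/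
noncomputable def leviCivita (i j k : Fin 3) : ℝ :=
  if i = j ∨ j = k ∨ i = k then 0
  else if (i, j, k) = (0, 1, 2) ∨ (i, j, k) = (1, 2, 0) ∨ (i, j, k) = (2, 0, 1) then 1
  else -1

/-- The `i`-th component of the curl of a vector field `A : ℝ³ → ℝ³` at `x`:
`(curl A (x))_i = Σ_{j,k} ε_{ijk} ∂_j A_k (x)`. -/
noncomputable def curlComp (A : EuclideanSpace ℝ (Fin 3) → EuclideanSpace ℝ (Fin 3))
    (x : EuclideanSpace ℝ (Fin 3)) (i : Fin 3) : ℝ :=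
  ∑ j, ∑ k, leviCivita i j k * fderiv ℝ (fun y => A y k) x (EuclideanSpace.single j 1)

/-- if two vector fields differentiable at a point `x₀` of an affine plane
`P ⊂ ℝ³` with unit normal `n` coincide on `P`, the normal component of the jump of
their curls at `x₀` vanishes: `⟪curl A⁺(x₀) − curl A⁻(x₀), n⟫ = 0`. -/
theorem curl_jump_normal_component_vanishes
    (P : AffineSubspace ℝ (EuclideanSpace ℝ (Fin 3)))
    (hP : Module.finrank ℝ P.direction = 2)
    (n : EuclideanSpace ℝ (Fin 3)) (hn : n ∈ P.directionᗮ) (hn1 : ‖n‖ = 1)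
    (Aplus Aminus : EuclideanSpace ℝ (Fin 3) → EuclideanSpace ℝ (Fin 3))
    (x₀ : EuclideanSpace ℝ (Fin 3)) (hx₀ : x₀ ∈ P)
    (hAp : DifferentiableAt ℝ Aplus x₀) (hAm : DifferentiableAt ℝ Aminus x₀)
    (heq : ∀ x ∈ P, Aplus x = Aminus x) :
    ∑ i, (curlComp Aplus x₀ i - curlComp Aminus x₀ i) * n i = 0 := by
  set L : EuclideanSpace ℝ (Fin 3) →L[ℝ] EuclideanSpace ℝ (Fin 3) :=
    fderiv ℝ Aplus x₀ - fderiv ℝ Aminus x₀ with hL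
  have hg : HasFDerivAt (fun y => Aplus y - Aminus y) L x₀ :=
    hAp.hasFDerivAt.sub hAm.hasFDerivAt
  -- L vanishes on the direction of P
  have hker : ∀ v ∈ P.direction, L v = 0 := by
    intro v hv
    have hcurve : ∀ t : ℝ, Aplus (x₀ + t • v) - Aminus (x₀ + t • v) = 0 := by
      intro t
      have hmem : x₀ + t • v ∈ P := by
        have := AffineSubspace.vadd_mem_of_mem_direction (P.direction.smul_mem t hv) hx₀
        simpa [vadd_eq_add, add_comm] using this
      rw [heq _ hmem, sub_self]
    have hline : HasDerivAt (fun t : ℝ => x₀ + t • v) v 0 := by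
      simpa using ((hasDerivAt_id (0:ℝ)).smul_const v).const_add x₀
    have hg' : HasFDerivAt (fun y => Aplus y - Aminus y) L (x₀ + (0:ℝ) • v) := by
      simpa using hg
    have hcomp : HasDerivAt (fun t : ℝ => Aplus (x₀ + t • v) - Aminus (x₀ + t • v)) (L v) 0 :=
      by have := hg'.comp_hasDerivAt (0:ℝ) hline; exact this
    have hzero : HasDerivAt (fun _ : ℝ => (0 : EuclideanSpace ℝ (Fin 3))) (L v) 0 := by
      apply hcomp.congr_of_eventuallyEq
      filter_upwards with t using (hcurve t).symm
    exact (hzero.unique (hasDerivAt_const _ _))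
  have hnne : n ≠ 0 := by intro h; simp [h] at hn1
  have hdir : P.direction = (ℝ ∙ n)ᗮ := by
    apply Submodule.eq_of_le_of_finrank_eq
    · intro v hv
      rw [Submodule.mem_orthogonal_singleton_iff_inner_right, real_inner_comm]
      exact hn v hv
    · rw [hP]
      have : Fact (Module.finrank ℝ (EuclideanSpace ℝ (Fin 3)) = 2 + 1) := ⟨by simp⟩
      exact (Submodule.finrank_orthogonal_span_singleton hnne).symm
  have hinn : ⟪n, n⟫ = 1 := by
    rw [real_inner_self_eq_norm_sq, hn1]; norm_num
  have hLu : ∀ u : EuclideanSpace ℝ (Fin 3), L u = ⟪u, n⟫ • L n := by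
    intro u
    have hw : u - ⟪u, n⟫ • n ∈ P.direction := by
      rw [hdir, Submodule.mem_orthogonal_singleton_iff_inner_right]
      rw [inner_sub_right, inner_smul_right, hinn, real_inner_comm n u]; ring
    have := hker _ hw
    rw [map_sub, map_smul, sub_eq_zero] at this
    exact this
  set c : EuclideanSpace ℝ (Fin 3) := L n with hc
  have hpart : ∀ (j k : Fin 3),
      fderiv ℝ (fun y => Aplus y k) x₀ (EuclideanSpace.single j 1)
        - fderiv ℝ (fun y => Aminus y k) x₀ (EuclideanSpace.single j 1)
      = n j * c k := by
    intro j k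
    have hp : fderiv ℝ (fun y => Aplus y k) x₀ =
        (EuclideanSpace.proj k).comp (fderiv ℝ Aplus x₀) :=
      ((EuclideanSpace.proj (𝕜 := ℝ) k).hasFDerivAt.comp x₀ hAp.hasFDerivAt).fderiv
    have hm : fderiv ℝ (fun y => Aminus y k) x₀ =
        (EuclideanSpace.proj k).comp (fderiv ℝ Aminus x₀) :=
      ((EuclideanSpace.proj (𝕜 := ℝ) k).hasFDerivAt.comp x₀ hAm.hasFDerivAt).fderiv
    have hLsj : L (EuclideanSpace.single j 1) = n j • c := by
      rw [hLu]
      congr 1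
      rw [EuclideanSpace.inner_single_left]
      simp
    have hk : (L (EuclideanSpace.single j 1)) k = n j * c k := by
      rw [hLsj]; rfl
    rw [hp, hm]
    simpa [hL, ContinuousLinearMap.sub_apply] using hk
  have hexp : ∀ i, curlComp Aplus x₀ i - curlComp Aminus x₀ i
      = ∑ j, ∑ k, leviCivita i j k * (n j * c k) := by
    intro i
    rw [curlComp, curlComp, ← Finset.sum_sub_distrib]
    refine Finset.sum_congr rfl fun j _ => ?_
    rw [← Finset.sum_sub_distrib]
    refine Finset.sum_congr rfl fun k _ => ?_
    rw [← mul_sub, hpart]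
  rw [Fin.sum_univ_three, hexp 0, hexp 1, hexp 2]
  simp only [Fin.sum_univ_three]
  norm_num [leviCivita, Fin.ext_iff]
  ring
end
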